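/- Define g̃ = sl(2|2) ⊕ ℂP ⊕ ℂK as the quotient of centrally extended gl(2|2) by the relation E_{11}+E_{22}−E_{33}−E_{44}=0. The map sending x₁⁺↦E_{21}, x₁⁻↦E_{12}, h₁↦E_{22}−E_{11}, x₂⁺↦−E_{32}, x₂⁻↦E_{23}, h₂↦−E_{33}−E_{22}, x₃⁺↦−E_{43}, x₃⁻↦E_{34}, h₃↦−E_{44}+E_{33}, P⁺↦P, P⁻↦−K, preserves all the Chevalley–Serre-type defining relations of g: [h_i,h_j]=0, [h_i,x_j^±]=±a_{ij}x_j^±, [x_i⁺,x_j⁻]=δ_{ij}h_i, [x₂^±,x₂^±]=[x₁^±,x₃^±]=0, [x_i^±,[x_i^±,x₂^±]]=0 for i=1,3, and [[x₁^±,x₂^±],[x₃^±,x₂^±]]=P₀^±, where the Cartan matrix is a = ((2,−1,0),(−1,0,1),(0,1,−2)) and brackets are super-brackets with x₂^± odd. -/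

import Mathlib

open Matrix BigOperators

/-- Carrier of the centrally extended `gl(2|2) ⊕ ℂP ⊕ ℂK` (matrix part, `P`-coefficient,
`K`-coefficient). -/
abbrev GlExt := (Matrix (Fin 4) (Fin 4) ℚ) × ℚ × ℚ

/-- The `ℤ₂`-grading on indices: `p(1)=p(2)=0`, `p(3)=p(4)=1` (here 0-based). -/
def par (i : Fin 4) : ℕ := if (i : ℕ) < 2 then 0 else 1

/-- `ε`: nonzero only with `ε_{12} = -ε_{21} = 1` (0-based: `ε_{01} = -ε_{10} = 1`). -/
def eps (i j : Fin 4) : ℚ :=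
  if i = 0 ∧ j = 1 then 1 else if i = 1 ∧ j = 0 then -1 else 0

/-- `ε̄`: nonzero only with `ε̄_{34} = -ε̄_{43} = 1` (0-based: `ε̄_{23} = -ε̄_{32} = 1`). -/
def epsBar (i j : Fin 4) : ℚ :=
  if i = 2 ∧ j = 3 then 1 else if i = 3 ∧ j = 2 then -1 else 0

/-- The sign `(-1)^{(p(i)+p(j))(p(k)+p(l))}`. -/
def sgn (i j k l : Fin 4) : ℚ := (-1 : ℚ) ^ ((par i + par j) * (par k + par l))

/-- The bilinear extension of the bracket
`[E_{ij},E_{kl}] = δ_{kj}E_{il} − (−1)^{(p(i)+p(j))(p(k)+p(l))}δ_{il}E_{kj}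
  + ε̄_{ik}ε_{jl}P + ε_{ik}ε̄_{jl}K`, with `P`, `K` central. -/
def br (u v : GlExt) : GlExt :=
  ( Matrix.of fun a b =>
      (∑ j, u.1 a j * v.1 j b) - ∑ i, sgn i b a i * v.1 a i * u.1 i b,
    ∑ i, ∑ j, ∑ k, ∑ l, u.1 i j * v.1 k l * epsBar i k * eps j l,
    ∑ i, ∑ j, ∑ k, ∑ l, u.1 i j * v.1 k l * eps i k * epsBar j l )

/-- The basis element `E_{ij}` (0-based indices). -/
def Eb (i j : Fin 4) : GlExt := (Matrix.single i j 1, 0, 0)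

/-- The central element `P`. -/
def Pc : GlExt := (0, 1, 0)

/-- The central element `K`. -/
def Kc : GlExt := (0, 0, 1)

/-- The images of the Chevalley generators `x_i^±`, `h_i` (for the Dynkin diagram
O-⊗-O), 0-based: `x₁⁺ ↦ E_{21}`, `x₂⁺ ↦ −E_{32}`, `x₃⁺ ↦ −E_{43}`, etc. -/
def xp : Fin 3 → GlExt := ![Eb 1 0, -Eb 2 1, -Eb 3 2]

def xm : Fin 3 → GlExt := ![Eb 0 1, Eb 1 2, Eb 2 3]

def hgen : Fin 3 → GlExt :=
  ![Eb 1 1 - Eb 0 0, -Eb 2 2 - Eb 1 1, -Eb 3 3 + Eb 2 2]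

/-- The symmetrized Cartan matrix. -/
def cartanA : Matrix (Fin 3) (Fin 3) ℚ := !![2, -1, 0; -1, 0, 1; 0, 1, -2]

set_option maxHeartbeats 4000000 in
/-- The map `x₁⁺↦E_{21}`, `x₁⁻↦E_{12}`, `h₁↦E_{22}−E_{11}`, `x₂⁺↦−E_{32}`,
`x₂⁻↦E_{23}`, `h₂↦−E_{33}−E_{22}`, `x₃⁺↦−E_{43}`, `x₃⁻↦E_{34}`, `h₃↦−E_{44}+E_{33}`,
`P⁺↦P`, `P⁻↦−K` preserves all the Chevalley–Serre-type defining relations of the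
centrally extended Lie superalgebra `g` (stated in `g̃`, here verified already at the
level of the centrally extended `gl(2|2)`, which maps onto the quotient `g̃`). -/
theorem chevalley_relations_preserved :
    (∀ i j : Fin 3, br (hgen i) (hgen j) = 0)
    ∧ (∀ i j : Fin 3, br (hgen i) (xp j) = cartanA i j • xp j)
    ∧ (∀ i j : Fin 3, br (hgen i) (xm j) = (-(cartanA i j)) • xm j)
    ∧ (∀ i j : Fin 3, br (xp i) (xm j) = if i = j then hgen i else 0)
    ∧ br (xp 1) (xp 1) = 0 ∧ br (xm 1) (xm 1) = 0
    ∧ br (xp 0) (xp 2) = 0 ∧ br (xm 0) (xm 2) = 0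
    ∧ (∀ i : Fin 3, i = 0 ∨ i = 2 →
        br (xp i) (br (xp i) (xp 1)) = 0 ∧ br (xm i) (br (xm i) (xm 1)) = 0)
    ∧ br (br (xp 0) (xp 1)) (br (xp 2) (xp 1)) = Pc
    ∧ br (br (xm 0) (xm 1)) (br (xm 2) (xm 1)) = -Kc := by
  refine ⟨?_, ?_, ?_, ?_, ?_, ?_, ?_, ?_, ?_, ?_, ?_⟩
  · exact of_decide_eq_true (by with_unfolding_all rfl)
  · exact of_decide_eq_true (by with_unfolding_all rfl)
  · exact of_decide_eq_true (by with_unfolding_all rfl)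
  · exact of_decide_eq_true (by with_unfolding_all rfl)
  · exact of_decide_eq_true (by with_unfolding_all rfl)
  · exact of_decide_eq_true (by with_unfolding_all rfl)
  · exact of_decide_eq_true (by with_unfolding_all rfl)
  · exact of_decide_eq_true (by with_unfolding_all rfl)
  · exact of_decide_eq_true (by with_unfolding_all rfl)
  · exact of_decide_eq_true (by with_unfolding_all rfl)
  · exact of_decide_eq_true (by with_unfolding_all rfl)
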